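/- For every natural number k, d_k = 2^{2k+1} − 1, where d_k is the maximum over all vertices v of P^k of the distance from v to the set W_k of the three 2-valent vertices of P^k. -/

import Mathlib

open SimpleGraph

/-- Degree of a vertex, via the cardinality of its neighbor set. -/
noncomputable def hdeg {V : Type*} (G : SimpleGraph V) (v : V) : ℕ :=
  {w | G.Adj v w}.ncard

/-- A cubic graph: every vertex has degree 3. -/
def IsCubic {V : Type*} (G : SimpleGraph V) : Prop := ∀ v, hdeg G v = 3

/-- A 2-connected graph: at least 3 vertices and deleting any vertex leaves it connected. -/
def TwoConnected {V : Type*} (G : SimpleGraph V) : Prop :=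
  3 ≤ Nat.card V ∧ ∀ v : V, (G.induce {v}ᶜ).Connected

/-- A 3-connected graph: at least 4 vertices and deleting any two vertices leaves it connected. -/
def ThreeConnected {V : Type*} (G : SimpleGraph V) : Prop :=
  4 ≤ Nat.card V ∧ ∀ v w : V, v ≠ w → (G.induce ({v, w} : Set V)ᶜ).Connected

/-- Edge list of the Petersen graph on `Fin 10` (vertex 9 has neighbors 4, 6, 7). -/
def petEdges : List (Fin 10 × Fin 10) :=
  [(0,1),(1,2),(2,3),(3,4),(4,0),(0,5),(1,6),(2,7),(3,8),(4,9),(5,7),(7,9),(9,6),(6,8),(8,5)]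

/-- The Petersen graph `P₁₀`. -/
def Pet : SimpleGraph (Fin 10) := SimpleGraph.fromRel (fun a b => (a, b) ∈ petEdges)

/-- Edge list of `P = P₁₀ - z` on `Fin 9` (where `z` was vertex 9);
its three 2-valent vertices are 4, 6, 7. -/
def pEdges : List (Fin 9 × Fin 9) :=
  [(0,1),(1,2),(2,3),(3,4),(4,0),(0,5),(1,6),(2,7),(3,8),(5,7),(6,8),(8,5)]

/-- The graph `P = P₁₀ - z`, the Petersen graph minus one vertex. -/
def Pgr : SimpleGraph (Fin 9) := SimpleGraph.fromRel (fun a b => (a, b) ∈ pEdges)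

/-- The three 2-valent vertices of `P` (as targets of the port assignment). -/
def portIdx : ℕ → Fin 9
  | 0 => 4
  | 1 => 6
  | _ => 7

/-- Port assignment: to which 2-valent vertex of the copy of `P` replacing `u` the
neighbor `v` of `u` gets attached (neighbors are ordered by the injective encoding `enc`). -/
noncomputable def port {V : Type*} (G : SimpleGraph V) (enc : V → ℕ) (u v : V) : Fin 9 :=
  portIdx (Nat.card {w : V | G.Adj u w ∧ enc w < enc v})

/-- Simultaneous `P`-inflation at every vertex of `G`. -/
noncomputable def inflate {V : Type*} (G : SimpleGraph V) (enc : V → ℕ) :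
    SimpleGraph (V × Fin 9) where
  Adj a b :=
    (a.1 = b.1 ∧ Pgr.Adj a.2 b.2) ∨
    (G.Adj a.1 b.1 ∧ a.2 = port G enc a.1 b.1 ∧ b.2 = port G enc b.1 a.1)
  symm := ⟨by
    rintro a b (⟨h1, h2⟩ | ⟨h1, h2, h3⟩)
    · exact Or.inl ⟨h1.symm, h2.symm⟩
    · exact Or.inr ⟨h1.symm, h3, h2⟩⟩
  loopless := ⟨by
    rintro a (⟨-, h⟩ | ⟨h, -, -⟩)
    · exact Pgr.loopless.irrefl _ h
    · exact G.loopless.irrefl _ h⟩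

/-- A graph bundled with an injective-style encoding of its vertices into `ℕ`. -/
structure GE where
  V : Type
  G : SimpleGraph V
  enc : V → ℕ

/-- One round of simultaneous `P`-inflation. -/
noncomputable def step (A : GE) : GE :=
  ⟨A.V × Fin 9, inflate A.G A.enc, fun p => Nat.pair (A.enc p.1) p.2.val⟩

/-- The iterated Petersen graph `P₁₀ᵏ`. -/
noncomputable def ItP10 : ℕ → GE
  | 0 => ⟨Fin 10, Pet, Fin.val⟩
  | k + 1 => step (ItP10 k)

/-- The iterated graph `Pᵏ` (starting from `P = P₁₀ - z`). -/
noncomputable def ItP : ℕ → GE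
  | 0 => ⟨Fin 9, Pgr, Fin.val⟩
  | k + 1 => step (ItP k)

/-- The canonical copy of `P^{k-1}` in `P₁₀ᵏ` containing a given vertex,
recorded by the corresponding vertex of `P₁₀`. -/
noncomputable def baseOf : (k : ℕ) → (ItP10 k).V → Fin 10
  | 0 => id
  | k + 1 => fun p => baseOf k p.1

/-- The parameter `l(G)`: minimum over circuits `C` of the maximum over vertices `v`
of the distance `d(C, v)`. -/
noncomputable def ell {V : Type*} (G : SimpleGraph V) : ℕ :=
  sInf { n | ∃ (v : V) (w : G.Walk v v), w.IsCycle ∧ ∀ u : V, ∃ x ∈ w.support, G.dist x u ≤ n }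

/-- `M` is a matching of `G`: a set of edges of `G`, pairwise not sharing a vertex. -/
def IsMatchingSet {V : Type*} (G : SimpleGraph V) (M : Set (Sym2 V)) : Prop :=
  M ⊆ G.edgeSet ∧ ∀ e ∈ M, ∀ f ∈ M, e ≠ f → ∀ v : V, ¬(v ∈ e ∧ v ∈ f)

/-- Every connected component of `H` has an even number of vertices. -/
def EvenComponents {V : Type*} (H : SimpleGraph V) : Prop :=
  ∀ c : H.ConnectedComponent, Even c.supp.ncard

/-- An `f`-matching: a matching `M` such that every component of `G - M` is
2-connected and has an even number of vertices. -/
def IsFMatching {V : Type*} (G : SimpleGraph V) (M : Set (Sym2 V)) : Prop :=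
  IsMatchingSet G M ∧
    ∀ c : (G.deleteEdges M).ConnectedComponent,
      TwoConnected ((G.deleteEdges M).induce c.supp) ∧ Even c.supp.ncard

/-- A minimal edge cut of `G`: deleting it disconnects `G`, but deleting any
proper subset does not. -/
def IsMinEdgeCut {V : Type*} (G : SimpleGraph V) (E : Set (Sym2 V)) : Prop :=
  E ⊆ G.edgeSet ∧ ¬(G.deleteEdges E).Connected ∧
    ∀ F : Set (Sym2 V), F ⊂ E → (G.deleteEdges F).Connected

/-- `H` is a subdivision of `F`: the vertices of `F` embed into `H` and each edge of `F`
corresponds to a path in `H`, the paths being internally disjoint and covering `H`. -/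
def IsSubdivisionOf {W U : Type*} (H : SimpleGraph W) (F : SimpleGraph U) : Prop :=
  ∃ f : U ↪ W, ∃ p : ∀ u v : U, F.Adj u v → H.Walk (f u) (f v),
    (∀ u v h, (p u v h).IsPath) ∧
    (∀ u v h, ∀ w ∈ (p u v h).support, w ∈ Set.range f → w = f u ∨ w = f v) ∧
    (∀ e : Sym2 W, e ∈ H.edgeSet ↔ ∃ u v h, e ∈ (p u v h).edges) ∧
    (∀ w : W, w ∈ Set.range f ∨ ∃ u v h, w ∈ (p u v h).support) ∧
    (∀ u v h u' v' h', ∀ w : W,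
      w ∈ (p u v h).support → w ∈ (p u' v' h').support →
      w ∈ Set.range f ∨ (u = u' ∧ v = v') ∨ (u = v' ∧ v = u'))

/-- Each component of `F` is an even circuit or a 2-connected cubic graph. -/
def GoodFrameComponents {U : Type*} (F : SimpleGraph U) : Prop :=
  ∀ c : F.ConnectedComponent,
    ((F.induce c.supp).Connected ∧ (∀ v, hdeg (F.induce c.supp) v = 2) ∧ Even c.supp.ncard) ∨
    (TwoConnected (F.induce c.supp) ∧ IsCubic (F.induce c.supp))

/-- `F` is a frame of `G`. -/
def IsFrame {U V : Type*} (F : SimpleGraph U) (G : SimpleGraph V) : Prop :=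
  GoodFrameComponents F ∧
    ∃ H : SimpleGraph V, H ≤ G ∧ IsSubdivisionOf H F ∧ EvenComponents H

/-- A proper 3-edge-coloring of `G`. -/
def ProperEdgeColoring {V : Type*} (G : SimpleGraph V) (f : Sym2 V → Fin 3) : Prop :=
  ∀ u v w : V, G.Adj u v → G.Adj u w → v ≠ w → f s(u, v) ≠ f s(u, w)

/-- The spanning subgraph of edges whose color is different from `c`
(i.e. the union of the other two color classes). -/
def twoClassSub {V : Type*} (G : SimpleGraph V) (f : Sym2 V → Fin 3) (c : Fin 3) :
    SimpleGraph V where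
  Adj u v := G.Adj u v ∧ f s(u, v) ≠ c
  symm := ⟨by
    rintro u v ⟨h1, h2⟩
    exact ⟨h1.symm, by rwa [Sym2.eq_swap]⟩⟩
  loopless := ⟨fun v h => G.loopless.irrefl v h.1⟩

/-- A Kotzig graph: a cubic graph with a proper 3-edge-coloring in which any two
color classes form a hamiltonian circuit. -/
def IsKotzig {V : Type*} (G : SimpleGraph V) : Prop :=
  IsCubic G ∧ ∃ f : Sym2 V → Fin 3, ProperEdgeColoring G f ∧
    ∀ c : Fin 3, (twoClassSub G f c).Connected ∧ ∀ v, hdeg (twoClassSub G f c) v = 2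

/-- The family `Fam` is an even subdivision-factor of `G`. -/
def IsEvenSubdivFactor {ι : Type*} (Fam : ι → Σ n : ℕ, SimpleGraph (Fin n))
    {V : Type*} (G : SimpleGraph V) : Prop :=
  ∃ H : SimpleGraph V, H ≤ G ∧ ∀ c : H.ConnectedComponent,
    Even c.supp.ncard ∧ ∃ i, IsSubdivisionOf (H.induce c.supp) (Fam i).2

set_option linter.unusedSectionVars false

instance : DecidableRel Pgr.Adj := fun a b =>
  decidable_of_iff (a ≠ b ∧ ((a,b) ∈ pEdges ∨ (b,a) ∈ pEdges)) (by rw [Pgr, SimpleGraph.fromRel_adj])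

/-- bounded reachability -/
def reachN : ℕ → Fin 9 → Fin 9 → Prop
  | 0, a, b => a = b
  | n+1, a, b => a = b ∨ ∃ x, Pgr.Adj a x ∧ reachN n x b

instance : ∀ n a b, Decidable (reachN n a b)
  | 0, a, b => by unfold reachN; infer_instance
  | n+1, a, b => by
      unfold reachN
      have := fun x => instDecidableReachN n x b
      infer_instance

lemma reachN_walk {n a b} (h : reachN n a b) : ∃ w : Pgr.Walk a b, w.length ≤ n := by
  induction n generalizing a with
  | zero => cases h; exact ⟨Walk.nil, by simp⟩
  | succ n ih =>
    rcases h with rfl | ⟨x, hax, hx⟩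
    · exact ⟨Walk.nil, by simp⟩
    · obtain ⟨w, hw⟩ := ih hx
      exact ⟨Walk.cons hax w, by simpa using Nat.succ_le_succ hw⟩

lemma walk_reachN {a b} (w : Pgr.Walk a b) : ∀ n, w.length ≤ n → reachN n a b := by
  induction w with
  | nil => intro n _; cases n <;> simp [reachN]
  | cons h p ih =>
      intro n hn
      cases n with
      | zero => simp at hn
      | succ n => exact Or.inr ⟨_, h, ih n (by simpa using hn)⟩

lemma Pgr_conn : Pgr.Connected := by
  rw [SimpleGraph.connected_iff]
  refine ⟨fun a b => ?_, ⟨0⟩⟩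
  have h4 : ∀ x : Fin 9, reachN 3 x 4 := by decide
  obtain ⟨w1, -⟩ := reachN_walk (h4 a)
  obtain ⟨w2, -⟩ := reachN_walk (h4 b)
  exact ⟨w1.append w2.reverse⟩

lemma dist_le_of_reachN {a b n} (h : reachN n a b) : Pgr.dist a b ≤ n := by
  obtain ⟨w, hw⟩ := reachN_walk h
  exact le_trans (SimpleGraph.dist_le w) hw

lemma reachN_of_dist_le {a b n} (h : Pgr.dist a b ≤ n) : reachN n a b := by
  obtain ⟨w, hw⟩ := (Pgr_conn a b).exists_walk_length_eq_dist
  exact walk_reachN w n (by omega)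

lemma dist_eq_of {a b n} (h1 : reachN n a b) (h2 : ¬ reachN (n-1) a b) (hn : 1 ≤ n) :
    Pgr.dist a b = n := by
  have := dist_le_of_reachN h1
  by_contra hne
  exact h2 (reachN_of_dist_le (n := n-1) (by omega))

-- port-port distances
lemma dist_ports : ∀ a ∈ ({4,6,7} : Set (Fin 9)), ∀ b ∈ ({4,6,7} : Set (Fin 9)), a ≠ b →
    Pgr.dist a b = 3 := by
  intro a ha b hb hne
  simp only [Set.mem_insert_iff, Set.mem_singleton_iff] at ha hb
  rcases ha with rfl|rfl|rfl <;> rcases hb with rfl|rfl|rfl <;> first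
    | exact absurd rfl hne
    | exact dist_eq_of (by decide) (by decide) (by decide)

lemma dist_to_port_le : ∀ a : Fin 9, ∀ b ∈ ({4,6,7} : Set (Fin 9)), Pgr.dist a b ≤ 3 := by
  intro a b hb
  apply dist_le_of_reachN
  simp only [Set.mem_insert_iff, Set.mem_singleton_iff] at hb
  rcases hb with rfl|rfl|rfl <;> revert a <;> decide

-- degrees
lemma hdeg_Pgr (v : Fin 9) : hdeg Pgr v = (Finset.univ.filter (fun w => Pgr.Adj v w)).card := by
  rw [hdeg, Set.ncard_eq_toFinset_card']
  congr 1
  ext x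
  simp

lemma hdeg_Pgr_vals : ∀ v : Fin 9, hdeg Pgr v = if v = 4 ∨ v = 6 ∨ v = 7 then 2 else 3 := by
  intro v
  rw [hdeg_Pgr]
  revert v; decide

section PortFacts

variable {V : Type*} [Finite V] {G : SimpleGraph V} {enc : V → ℕ}

/-- the count underlying `port`. -/
noncomputable def cnt (G : SimpleGraph V) (enc : V → ℕ) (u v : V) : ℕ :=
  {w : V | G.Adj u w ∧ enc w < enc v}.ncard

lemma port_eq (u v : V) : port G enc u v = portIdx (cnt G enc u v) := by
  rw [port, cnt, Nat.card_coe_set_eq]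

lemma cnt_lt {u y z : V} (hy : G.Adj u y) (h : enc y < enc z) :
    cnt G enc u y < cnt G enc u z := by
  apply Set.ncard_lt_ncard _ (Set.toFinite _)
  constructor
  · exact fun w ⟨h1, h2⟩ => ⟨h1, h2.trans h⟩
  · intro hsub
    have : y ∈ {w : V | G.Adj u w ∧ enc w < enc y} := hsub ⟨hy, h⟩
    simp at this

lemma cnt_ne (hinj : Function.Injective enc) {u y z : V} (hy : G.Adj u y) (hz : G.Adj u z)
    (hne : y ≠ z) : cnt G enc u y ≠ cnt G enc u z := by
  rcases lt_or_gt_of_ne (fun h => hne (hinj h)) with h | h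
  · exact Nat.ne_of_lt (cnt_lt hy h)
  · exact (Nat.ne_of_lt (cnt_lt hz h)).symm

lemma cnt_lt_hdeg {u y : V} (hy : G.Adj u y) : cnt G enc u y < hdeg G u := by
  have h1 : insert y {w : V | G.Adj u w ∧ enc w < enc y} ⊆ {w | G.Adj u w} := by
    intro w hw
    rcases hw with rfl | ⟨h1, -⟩
    · exact hy
    · exact h1
  have h2 : y ∉ {w : V | G.Adj u w ∧ enc w < enc y} := by simp
  have h3 := Set.ncard_le_ncard h1 (Set.toFinite _)
  rw [Set.ncard_insert_of_notMem h2 (Set.toFinite _)] at h3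
  exact lt_of_lt_of_le (Nat.lt_succ_self _) h3

lemma portIdx_mem (n : ℕ) : portIdx n = 4 ∨ portIdx n = 6 ∨ portIdx n = 7 := by
  rcases n with _ | _ | n <;> simp [portIdx]

lemma portIdx_inj_lt {m n : ℕ} (h : m < n) (hn : n ≤ 2) : portIdx m ≠ portIdx n := by
  interval_cases n <;> interval_cases m <;> decide

lemma port_inj (hinj : Function.Injective enc) {u y z : V} (hu : hdeg G u ≤ 3)
    (hy : G.Adj u y) (hz : G.Adj u z) (hne : y ≠ z) : port G enc u y ≠ port G enc u z := by
  rw [port_eq, port_eq]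
  have h1 := cnt_lt_hdeg (enc := enc) hy
  have h2 := cnt_lt_hdeg (enc := enc) hz
  rcases Nat.lt_or_ge (cnt G enc u y) (cnt G enc u z) with h | h
  · exact portIdx_inj_lt h (by omega)
  · have hlt : cnt G enc u z < cnt G enc u y :=
      Nat.lt_of_le_of_ne h (Ne.symm (cnt_ne hinj hy hz hne))
    exact (portIdx_inj_lt hlt (by omega)).symm

lemma port_mem (u v : V) : port G enc u v = 4 ∨ port G enc u v = 6 ∨ port G enc u v = 7 := by
  rw [port_eq]; exact portIdx_mem _

lemma port_deg2 {u y : V} (hu : hdeg G u = 2) (hy : G.Adj u y) :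
    port G enc u y = 4 ∨ port G enc u y = 6 := by
  have h := cnt_lt_hdeg (enc := enc) hy
  rw [port_eq]
  rw [hu] at h
  interval_cases (cnt G enc u y) <;> simp [portIdx]

lemma port_deg2_cover (hinj : Function.Injective enc) {u : V} (hu : hdeg G u = 2) :
    (∃ y, G.Adj u y ∧ port G enc u y = 4) ∧ (∃ y, G.Adj u y ∧ port G enc u y = 6) := by
  obtain ⟨a, b, hab, hset⟩ := Set.ncard_eq_two.mp hu
  have ha : G.Adj u a := by rw [← Set.mem_setOf_eq (p := fun w => G.Adj u w), hset]; simp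
  have hb : G.Adj u b := by rw [← Set.mem_setOf_eq (p := fun w => G.Adj u w), hset]; simp
  have h1 := cnt_lt_hdeg (enc := enc) ha
  have h2 := cnt_lt_hdeg (enc := enc) hb
  rw [hu] at h1 h2
  have hne := cnt_ne hinj ha hb hab
  rcases Nat.lt_or_ge (cnt G enc u a) (cnt G enc u b) with h | h
  · have : cnt G enc u a = 0 ∧ cnt G enc u b = 1 := by omega
    exact ⟨⟨a, ha, by rw [port_eq, this.1]; rfl⟩, ⟨b, hb, by rw [port_eq, this.2]; rfl⟩⟩
  · have : cnt G enc u b = 0 ∧ cnt G enc u a = 1 := by omega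
    exact ⟨⟨b, hb, by rw [port_eq, this.1]; rfl⟩, ⟨a, ha, by rw [port_eq, this.2]; rfl⟩⟩

lemma port_deg3_cover (hinj : Function.Injective enc) {u : V} (hu : hdeg G u = 3) :
    ∀ p : Fin 9, p = 4 ∨ p = 6 ∨ p = 7 → ∃ y, G.Adj u y ∧ port G enc u y = p := by
  obtain ⟨a, b, c, hab, hac, hbc, hset⟩ := Set.ncard_eq_three.mp hu
  have ha : G.Adj u a := by rw [← Set.mem_setOf_eq (p := fun w => G.Adj u w), hset]; simp
  have hb : G.Adj u b := by rw [← Set.mem_setOf_eq (p := fun w => G.Adj u w), hset]; simp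
  have hc : G.Adj u c := by rw [← Set.mem_setOf_eq (p := fun w => G.Adj u w), hset]; simp
  have h1 := cnt_lt_hdeg (enc := enc) ha
  have h2 := cnt_lt_hdeg (enc := enc) hb
  have h3 := cnt_lt_hdeg (enc := enc) hc
  rw [hu] at h1 h2 h3
  have hne1 := cnt_ne hinj ha hb hab
  have hne2 := cnt_ne hinj ha hc hac
  have hne3 := cnt_ne hinj hb hc hbc
  intro p hp
  have key : ∀ n : ℕ, n ≤ 2 →
      cnt G enc u a = n ∨ cnt G enc u b = n ∨ cnt G enc u c = n := by omega
  rcases hp with rfl | rfl | rfl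
  · rcases key 0 (by omega) with h | h | h
    · exact ⟨a, ha, by rw [port_eq, h]; rfl⟩
    · exact ⟨b, hb, by rw [port_eq, h]; rfl⟩
    · exact ⟨c, hc, by rw [port_eq, h]; rfl⟩
  · rcases key 1 (by omega) with h | h | h
    · exact ⟨a, ha, by rw [port_eq, h]; rfl⟩
    · exact ⟨b, hb, by rw [port_eq, h]; rfl⟩
    · exact ⟨c, hc, by rw [port_eq, h]; rfl⟩
  · rcases key 2 (by omega) with h | h | h
    · exact ⟨a, ha, by rw [port_eq, h]; rfl⟩
    · exact ⟨b, hb, by rw [port_eq, h]; rfl⟩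
    · exact ⟨c, hc, by rw [port_eq, h]; rfl⟩

end PortFacts

section InflateFacts

variable {V : Type*} [Finite V] {G : SimpleGraph V} {enc : V → ℕ}

lemma inflate_adj {u v : V} {a b : Fin 9} :
    (inflate G enc).Adj (u, a) (v, b) ↔
      (u = v ∧ Pgr.Adj a b) ∨
      (G.Adj u v ∧ a = port G enc u v ∧ b = port G enc v u) := Iff.rfl

lemma himg_ncard (u : V) (a : Fin 9) :
    ((fun b => (u, b)) '' {b | Pgr.Adj a b}).ncard = hdeg Pgr a := by
  rw [Set.ncard_image_of_injective _ (fun x y h => (Prod.mk.injEq _ _ _ _).mp h |>.2)]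
  rfl

lemma hdeg_inflate_pos (hinj : Function.Injective enc) {u : V} (hu : hdeg G u ≤ 3) {a : Fin 9}
    {y0 : V} (hy0 : G.Adj u y0) (hp0 : port G enc u y0 = a) :
    hdeg (inflate G enc) (u, a) = hdeg Pgr a + 1 := by
  have hset : {p | (inflate G enc).Adj (u, a) p} =
      ((fun b => (u, b)) '' {b | Pgr.Adj a b}) ∪ {(y0, port G enc y0 u)} := by
    ext ⟨v, b⟩
    rw [Set.mem_setOf_eq, inflate_adj]
    constructor
    · rintro (⟨rfl, h2⟩ | ⟨h1, h2, h3⟩)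
      · exact Or.inl ⟨b, h2, rfl⟩
      · have hvy : v = y0 := by
          by_contra hne
          exact port_inj hinj hu h1 hy0 hne (h2.symm.trans hp0.symm)
        subst hvy
        subst h3
        exact Or.inr rfl
    · rintro (⟨b', hb', heq⟩ | h)
      · obtain ⟨rfl, rfl⟩ : u = v ∧ b' = b := Prod.mk.injEq .. ▸ heq
        exact Or.inl ⟨rfl, hb'⟩
      · simp only [Set.mem_singleton_iff] at h
        obtain ⟨rfl, rfl⟩ : v = y0 ∧ b = port G enc y0 u := Prod.mk.injEq .. ▸ h
        exact Or.inr ⟨hy0, hp0.symm, rfl⟩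
  rw [hdeg, hset, Set.ncard_union_eq ?dis (Set.toFinite _) (Set.toFinite _), himg_ncard,
    Set.ncard_singleton]
  case dis =>
    rw [Set.disjoint_singleton_right]
    rintro ⟨b', -, heq⟩
    have : u = y0 := congrArg Prod.fst heq
    exact G.loopless.irrefl u (this ▸ hy0)

lemma hdeg_inflate_neg {u : V} {a : Fin 9}
    (hex : ¬ ∃ y, G.Adj u y ∧ port G enc u y = a) :
    hdeg (inflate G enc) (u, a) = hdeg Pgr a := by
  have hset : {p | (inflate G enc).Adj (u, a) p} =
      ((fun b => (u, b)) '' {b | Pgr.Adj a b}) := by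
    ext ⟨v, b⟩
    rw [Set.mem_setOf_eq, inflate_adj]
    constructor
    · rintro (⟨rfl, h2⟩ | ⟨h1, h2, h3⟩)
      · exact ⟨b, h2, rfl⟩
      · exact absurd ⟨v, h1, h2.symm⟩ hex
    · rintro ⟨b', hb', heq⟩
      obtain ⟨rfl, rfl⟩ : u = v ∧ b' = b := Prod.mk.injEq .. ▸ heq
      exact Or.inl ⟨rfl, hb'⟩
  rw [hdeg, hset, himg_ncard]

lemma hdeg_inflate_cases (hinj : Function.Injective enc)
    (hdegs : ∀ v, hdeg G v = 2 ∨ hdeg G v = 3) (u : V) (a : Fin 9) :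
    (hdeg (inflate G enc) (u, a) = 2 ∧ hdeg G u = 2 ∧ a = 7) ∨
    (hdeg (inflate G enc) (u, a) = 3 ∧ ¬(hdeg G u = 2 ∧ a = 7)) := by
  have hu3 : hdeg G u ≤ 3 := by rcases hdegs u with h | h <;> omega
  have hPa := hdeg_Pgr_vals a
  rcases hdegs u with hu | hu
  · by_cases ha : a = 7
    · subst ha
      left
      refine ⟨?_, hu, rfl⟩
      rw [hdeg_inflate_neg ?hex, hPa, if_pos (by tauto)]
      case hex =>
        rintro ⟨y, hy, hp⟩
        rcases port_deg2 hu hy with h | h <;> rw [hp] at h <;> exact absurd h (by decide)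
    · right
      refine ⟨?_, fun hh => ha hh.2⟩
      by_cases ha46 : a = 4 ∨ a = 6
      · obtain ⟨h4, h6⟩ := port_deg2_cover hinj (u := u) hu
        have hex : ∃ y, G.Adj u y ∧ port G enc u y = a := by
          rcases ha46 with rfl | rfl
          · exact h4
          · exact h6
        obtain ⟨y0, hy0, hp0⟩ := hex
        rw [hdeg_inflate_pos hinj hu3 hy0 hp0, hPa, if_pos (by tauto)]
      · rw [hdeg_inflate_neg ?hex, hPa, if_neg (by tauto)]
        case hex =>
          rintro ⟨y, hy, hp⟩
          rcases port_deg2 hu hy with h | h <;> rw [hp] at h <;> tauto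
  · right
    constructor
    · by_cases ha : a = 4 ∨ a = 6 ∨ a = 7
      · obtain ⟨y0, hy0, hp0⟩ := port_deg3_cover hinj hu a ha
        rw [hdeg_inflate_pos hinj hu3 hy0 hp0, hPa, if_pos ha]
      · rw [hdeg_inflate_neg ?hex, hPa, if_neg ha]
        case hex =>
          rintro ⟨y, hy, hp⟩
          exact ha (hp ▸ port_mem u y)
    · rintro ⟨hh, -⟩; omega

lemma hdeg_inflate_eq_two_iff (hinj : Function.Injective enc)
    (hdegs : ∀ v, hdeg G v = 2 ∨ hdeg G v = 3) (u : V) (a : Fin 9) :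
    hdeg (inflate G enc) (u, a) = 2 ↔ (hdeg G u = 2 ∧ a = 7) := by
  rcases hdeg_inflate_cases hinj hdegs u a with ⟨h1, h2⟩ | ⟨h1, h2⟩
  · exact ⟨fun _ => h2, fun _ => h1⟩
  · rw [h1]
    exact ⟨fun hh => by omega, fun hh => absurd hh h2⟩

/-- the canonical copy embedding as a graph hom -/
def copyHom (G : SimpleGraph V) (enc : V → ℕ) (u : V) : Pgr →g inflate G enc where
  toFun a := (u, a)
  map_rel' := fun h => Or.inl ⟨rfl, h⟩

lemma inflate_connected (hG : G.Connected) : (inflate G enc).Connected := by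
  have hne : Nonempty V := hG.nonempty
  rw [SimpleGraph.connected_iff]
  refine ⟨?_, by infer_instance⟩
  have hcopy : ∀ (u : V) (a b : Fin 9), (inflate G enc).Reachable (u, a) (u, b) := by
    intro u a b
    exact (Pgr_conn a b).map (copyHom G enc u)
  have key : ∀ (u v : V), G.Walk u v → ∀ (a b : Fin 9),
      (inflate G enc).Reachable (u, a) (v, b) := by
    intro u v w
    induction w with
    | nil => exact fun a b => hcopy _ a b
    | @cons x y z h p ih =>
      intro a b
      have e1 : (inflate G enc).Reachable (x, port G enc x y) (y, port G enc y x) :=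
        SimpleGraph.Adj.reachable (Or.inr ⟨h, rfl, rfl⟩)
      exact (hcopy x a (port G enc x y)).trans (e1.trans (ih (port G enc y x) b))
  rintro ⟨u, a⟩ ⟨v, b⟩
  obtain ⟨w⟩ := hG u v
  exact key u v w a b

end InflateFacts

section Phi

variable {V : Type*} [Finite V] {G : SimpleGraph V} {enc : V → ℕ} {w : V}

open Classical in
/-- descent correction term -/
noncomputable def gfun (G : SimpleGraph V) (enc : V → ℕ) (w : V) (p : V × Fin 9) : ℕ :=
  if p.1 = w then Pgr.dist p.2 7
  else sInf ((fun y => Pgr.dist p.2 (port G enc p.1 y)) ''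
    {y | G.Adj p.1 y ∧ G.dist y w < G.dist p.1 w})

/-- the potential function bounding distance to `(w,7)` from below -/
noncomputable def phi (G : SimpleGraph V) (enc : V → ℕ) (w : V) (p : V × Fin 9) : ℕ :=
  4 * G.dist p.1 w + gfun G enc w p

lemma gfun_pos {u : V} (hu : u = w) (a : Fin 9) :
    gfun G enc w (u, a) = Pgr.dist a 7 := by
  rw [gfun]; exact if_pos hu

lemma gfun_neg {u : V} (hu : ¬ u = w) (a : Fin 9) :
    gfun G enc w (u, a) = sInf ((fun y => Pgr.dist a (port G enc u y)) ''
      {y | G.Adj u y ∧ G.dist y w < G.dist u w}) := by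
  rw [gfun]; exact if_neg hu

lemma phi_pair (u : V) (a : Fin 9) :
    phi G enc w (u, a) = 4 * G.dist u w + gfun G enc w (u, a) := rfl

lemma port_mem' (u v : V) : port G enc u v ∈ ({4, 6, 7} : Set (Fin 9)) := by
  rcases port_mem (G := G) (enc := enc) u v with h|h|h <;> simp [h]

lemma dist_lip {G : SimpleGraph V} (hG : G.Connected) {u v : V} (h : G.Adj u v) (w : V) :
    G.dist u w ≤ G.dist v w + 1 := by
  have h1 := hG.dist_triangle (u := u) (v := v) (w := w)
  have h2 : G.dist u v ≤ 1 := SimpleGraph.dist_le (Walk.cons h Walk.nil)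
  omega

lemma Pgr_dist_lip {a b : Fin 9} (h : Pgr.Adj a b) (c : Fin 9) :
    Pgr.dist a c ≤ Pgr.dist b c + 1 := dist_lip Pgr_conn h c

lemma desc_nonempty (hG : G.Connected) {u : V} (hu : u ≠ w) :
    {y | G.Adj u y ∧ G.dist y w < G.dist u w}.Nonempty := by
  obtain ⟨p, hp⟩ := (hG u w).exists_walk_length_eq_dist
  cases p with
  | nil => exact absurd rfl hu
  | @cons _ y _ h q =>
    refine ⟨y, h, ?_⟩
    have := SimpleGraph.dist_le q
    simp only [Walk.length_cons] at hp
    omega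

lemma sInf_eq_three {S : Set ℕ} (hne : S.Nonempty) (hall : ∀ x ∈ S, x = 3) : sInf S = 3 :=
  hall _ (Nat.sInf_mem hne)

lemma gfun_le_three (hG : G.Connected) {u : V} (hu : u ≠ w) (a : Fin 9) :
    gfun G enc w (u, a) ≤ 3 := by
  obtain ⟨y, hy⟩ := desc_nonempty (w := w) hG hu
  rw [gfun_neg hu]
  refine le_trans (Nat.sInf_le ⟨y, hy, rfl⟩) ?_
  exact dist_to_port_le _ _ (port_mem' u y)

lemma gfun_w_le (a : Fin 9) : gfun G enc w (w, a) ≤ 3 := by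
  rw [gfun_pos rfl]
  exact dist_to_port_le _ _ (by simp)

lemma gfun_desc_zero {u v : V} (hu : u ≠ w) (hadj : G.Adj u v)
    (hd : G.dist v w < G.dist u w) : gfun G enc w (u, port G enc u v) = 0 := by
  rw [gfun_neg hu]
  refine Nat.le_zero.mp (Nat.sInf_le ⟨v, ⟨hadj, hd⟩, ?_⟩)
  exact SimpleGraph.dist_self

lemma gfun_eq_three (hG : G.Connected) (hinj : Function.Injective enc)
    (hdegs : ∀ x, hdeg G x = 2 ∨ hdeg G x = 3) {v u : V} (hv : v ≠ w) (hadj : G.Adj v u)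
    (hnd : ¬ G.dist u w < G.dist v w) : gfun G enc w (v, port G enc v u) = 3 := by
  rw [gfun_neg hv]
  apply sInf_eq_three
  · exact (desc_nonempty (w := w) hG hv).image _
  · rintro x ⟨y, ⟨hy1, hy2⟩, rfl⟩
    have hyu : y ≠ u := fun h => hnd (h ▸ hy2)
    have hv3 : hdeg G v ≤ 3 := by rcases hdegs v with h|h <;> omega
    have hne := port_inj hinj hv3 hadj hy1 (Ne.symm hyu)
    exact dist_ports _ (port_mem' v u) _ (port_mem' v y) hne

lemma phi_lip (hG : G.Connected) (hinj : Function.Injective enc)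
    (hdegs : ∀ x, hdeg G x = 2 ∨ hdeg G x = 3) (hw : hdeg G w = 2) :
    ∀ p q, (inflate G enc).Adj p q → phi G enc w p ≤ phi G enc w q + 1 := by
  rintro ⟨u, a⟩ ⟨v, b⟩ h
  rcases inflate_adj.mp h with ⟨rfl, hP⟩ | ⟨hadj, ha, hb⟩
  · -- in-copy edge
    rw [phi_pair, phi_pair]
    have hgl : gfun G enc w (u, a) ≤ gfun G enc w (u, b) + 1 := by
      by_cases hu : u = w
      · rw [gfun_pos hu, gfun_pos hu]
        exact Pgr_dist_lip hP 7
      · rw [gfun_neg hu, gfun_neg hu]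
        have hne : ((fun y => Pgr.dist b (port G enc u y)) ''
            {y | G.Adj u y ∧ G.dist y w < G.dist u w}).Nonempty :=
          (desc_nonempty (w := w) hG hu).image _
        obtain ⟨y, hy, hval⟩ := Nat.sInf_mem hne
        have hval' : Pgr.dist b (port G enc u y) = sInf ((fun y => Pgr.dist b (port G enc u y)) ''
            {y | G.Adj u y ∧ G.dist y w < G.dist u w}) := hval
        have m1 : sInf ((fun y => Pgr.dist a (port G enc u y)) ''
            {y | G.Adj u y ∧ G.dist y w < G.dist u w}) ≤ Pgr.dist a (port G enc u y) :=
          Nat.sInf_le ⟨y, hy, rfl⟩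
        have m2 := Pgr_dist_lip hP (port G enc u y)
        omega
    omega
  · -- cross edge
    subst ha hb
    rw [phi_pair, phi_pair]
    by_cases hu : u = w
    · have hvw : v ≠ w := fun h => G.ne_of_adj hadj (hu.trans h.symm)
      have h1 : gfun G enc w (u, port G enc u v) ≤ 3 := by
        rw [gfun_pos hu]
        exact dist_to_port_le _ 7 (by simp)
      have h2 : 1 ≤ G.dist v w := hG.pos_dist_of_ne hvw
      have h3 : G.dist u w = 0 := by rw [hu]; exact SimpleGraph.dist_self
      omega
    · have h1 : 1 ≤ G.dist u w := hG.pos_dist_of_ne hu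
      by_cases hvw : v = w
      · have hDv : G.dist v w = 0 := by rw [hvw]; exact SimpleGraph.dist_self
        have hDu : G.dist u w ≤ 1 := by
          have := dist_lip hG hadj w
          omega
        have hg0 : gfun G enc w (u, port G enc u v) = 0 :=
          gfun_desc_zero hu hadj (by omega)
        have hwv : hdeg G v = 2 := by rw [hvw]; exact hw
        have hb46 := port_deg2 (enc := enc) hwv hadj.symm
        have hb3 : gfun G enc w (v, port G enc v u) = 3 := by
          rw [gfun_pos hvw]
          rcases hb46 with h'|h' <;> rw [h'] <;>
            exact dist_ports _ (by simp) _ (by simp) (by decide)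
        omega
      · -- u ≠ w, v ≠ w
        rcases lt_trichotomy (G.dist v w) (G.dist u w) with hlt | heq | hgt
        · have hg0 : gfun G enc w (u, port G enc u v) = 0 := gfun_desc_zero hu hadj hlt
          have hg3 : gfun G enc w (v, port G enc v u) = 3 :=
            gfun_eq_three hG hinj hdegs hvw hadj.symm (by omega)
          have hle := dist_lip hG hadj w
          omega
        · have hg3 : gfun G enc w (v, port G enc v u) = 3 :=
            gfun_eq_three hG hinj hdegs hvw hadj.symm (by omega)
          have hle3 : gfun G enc w (u, port G enc u v) ≤ 3 := gfun_le_three hG hu _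
          omega
        · have hle3 : gfun G enc w (u, port G enc u v) ≤ 3 := gfun_le_three hG hu _
          omega

lemma phi_le_add_walk (hG : G.Connected) (hinj : Function.Injective enc)
    (hdegs : ∀ x, hdeg G x = 2 ∨ hdeg G x = 3) (hw : hdeg G w = 2)
    {p t : V × Fin 9} (wk : (inflate G enc).Walk p t) :
    phi G enc w p ≤ phi G enc w t + wk.length := by
  induction wk with
  | nil => simp
  | cons h q ih =>
    have := phi_lip hG hinj hdegs hw _ _ h
    simp only [Walk.length_cons]
    omega

lemma phi_w7 : phi G enc w (w, (7 : Fin 9)) = 0 := by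
  rw [phi_pair, gfun_pos rfl, SimpleGraph.dist_self]
  have : Pgr.dist 7 7 = 0 := SimpleGraph.dist_self
  omega

lemma phi_le_dist (hG : G.Connected) (hinj : Function.Injective enc)
    (hdegs : ∀ x, hdeg G x = 2 ∨ hdeg G x = 3) (hw : hdeg G w = 2) (p : V × Fin 9) :
    phi G enc w p ≤ (inflate G enc).dist p (w, 7) := by
  obtain ⟨wk, hwk⟩ := ((inflate_connected hG) p (w, 7)).exists_walk_length_eq_dist
  have := phi_le_add_walk hG hinj hdegs hw (w := w) wk
  rw [phi_w7] at this
  omega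

end Phi

section Upper

variable {V : Type*} [Finite V] {G : SimpleGraph V} {enc : V → ℕ}

lemma reachN3_to_port : ∀ a b : Fin 9, (b = 4 ∨ b = 6 ∨ b = 7) → reachN 3 a b := by decide

lemma copy_dist_le {u : V} {a b : Fin 9} (h : reachN 3 a b) :
    (inflate G enc).dist (u, a) (u, b) ≤ 3 := by
  obtain ⟨pw, hpw⟩ := reachN_walk h
  have := SimpleGraph.dist_le (pw.map (copyHom G enc u))
  rw [Walk.length_map] at this
  exact le_trans this hpw
  
lemma step_dist_le {x y : V} (h : G.Adj x y) (a : Fin 9) :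
    (inflate G enc).dist (x, a) (y, port G enc y x) ≤ 4 := by
  obtain ⟨pw, hpw⟩ := reachN_walk (reachN3_to_port a (port G enc x y) (port_mem x y))
  have hcross : (inflate G enc).Adj (x, port G enc x y) (y, port G enc y x) :=
    Or.inr ⟨h, rfl, rfl⟩
  have h3 : (inflate G enc).dist (x, a) (y, port G enc y x) ≤ pw.length + 1 := by
    have := SimpleGraph.dist_le ((pw.map (copyHom G enc x)).append (Walk.cons hcross Walk.nil))
    rw [Walk.length_append, Walk.length_map] at this
    exact le_trans this (le_of_eq rfl)
  omega

lemma inflate_dist_le (hG : G.Connected) {u w : V} (q : G.Walk u w) (hq : 1 ≤ q.length)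
    (a : Fin 9) : (inflate G enc).dist (u, a) (w, 7) ≤ 4 * q.length + 3 := by
  induction q generalizing a with
  | nil => simp at hq
  | @cons x y z h p ih =>
    cases p with
    | nil =>
      have h1 := step_dist_le (enc := enc) h a
      have h2 : (inflate G enc).dist (y, port G enc y x) (y, (7 : Fin 9)) ≤ 3 :=
        copy_dist_le (reachN3_to_port _ 7 (by tauto))
      have := (inflate_connected (enc := enc) hG).dist_triangle
        (u := (x, a)) (v := (y, port G enc y x)) (w := (y, (7 : Fin 9)))
      simp only [Walk.length_cons, Walk.length_nil]
      omega
    | cons h' p' =>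
      have hp1 : 1 ≤ (Walk.cons h' p').length := by simp
      have h1 := step_dist_le (enc := enc) h a
      have h2 := ih hp1 (port G enc y x)
      have := (inflate_connected (enc := enc) hG).dist_triangle
        (u := (x, a)) (v := (y, port G enc y x)) (w := (z, (7 : Fin 9)))
      simp only [Walk.length_cons] at h2 ⊢
      omega

end Upper

/-- The inductive invariant. -/
structure InvP {V : Type*} (G : SimpleGraph V) (enc : V → ℕ) (d : ℕ) : Prop where
  fin : Finite V
  inj : Function.Injective enc
  conn : G.Connected
  degs : ∀ v, hdeg G v = 2 ∨ hdeg G v = 3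
  dpos : 1 ≤ d
  upper : ∀ v, ∃ w, hdeg G w = 2 ∧ G.dist v w ≤ d
  lower : ∃ u0 y, G.Adj u0 y ∧ (∀ w, hdeg G w = 2 → d ≤ G.dist u0 w) ∧
      (∀ w, hdeg G w = 2 → G.dist u0 w = d → d ≤ G.dist y w)

theorem InvP.step {V : Type*} {G : SimpleGraph V} {enc : V → ℕ} {d : ℕ}
    (h : InvP G enc d) :
    InvP (inflate G enc) (fun p => Nat.pair (enc p.1) p.2.val) (4 * d + 3) := by
  haveI := h.fin
  have hinj := h.inj
  have hG := h.conn
  have hdegs := h.degs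
  refine ⟨by infer_instance, ?_, inflate_connected hG, ?_, by omega, ?_, ?_⟩
  · rintro ⟨u, a⟩ ⟨v, b⟩ hpq
    obtain ⟨h1, h2⟩ := Nat.pair_eq_pair.mp hpq
    exact Prod.ext (hinj h1) (Fin.val_injective h2)
  · rintro ⟨u, a⟩
    rcases hdeg_inflate_cases hinj hdegs u a with ⟨h1, -⟩ | ⟨h1, -⟩
    · exact Or.inl h1
    · exact Or.inr h1
  · rintro ⟨u, a⟩
    obtain ⟨w, hw2, hdw⟩ := h.upper u
    refine ⟨(w, 7), (hdeg_inflate_eq_two_iff hinj hdegs w 7).mpr ⟨hw2, rfl⟩, ?_⟩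
    by_cases huw : u = w
    · subst huw
      have := copy_dist_le (G := G) (enc := enc) (u := u) (reachN3_to_port a 7 (by tauto))
      omega
    · obtain ⟨q, hq⟩ := (hG u w).exists_walk_length_eq_dist
      have hq1 : 1 ≤ q.length := by
        rw [hq]
        exact hG.pos_dist_of_ne huw
      have := inflate_dist_le (enc := enc) hG q hq1 a
      rw [hq] at this
      omega
  · obtain ⟨u0, y, hadj, hfar, htight⟩ := h.lower
    have hd1 := h.dpos
    refine ⟨(u0, port G enc u0 y), (y, port G enc y u0), Or.inr ⟨hadj, rfl, rfl⟩, ?_, ?_⟩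
    · rintro ⟨w, c⟩ h2
      obtain ⟨hw2, rfl⟩ := (hdeg_inflate_eq_two_iff hinj hdegs w c).mp h2
      have hDu0 := hfar w hw2
      have hphi := phi_le_dist hG hinj hdegs hw2 (u0, port G enc u0 y)
      rw [phi_pair] at hphi
      rcases Nat.eq_or_lt_of_le hDu0 with heq | hlt
      · have hu0w : u0 ≠ w := by
          intro hh
          rw [hh, SimpleGraph.dist_self] at heq
          omega
        have hg3 : gfun G enc w (u0, port G enc u0 y) = 3 := by
          refine gfun_eq_three hG hinj hdegs hu0w hadj ?_
          have := htight w hw2 heq.symm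
          omega
        rw [hg3, ← heq] at hphi
        omega
      · have := gfun_le_three (w := w) hG (enc := enc) (u := u0)
        omega
    · rintro ⟨w, c⟩ h2 hdist
      obtain ⟨hw2, rfl⟩ := (hdeg_inflate_eq_two_iff hinj hdegs w c).mp h2
      have hphiu := phi_le_dist hG hinj hdegs hw2 (u0, port G enc u0 y)
      rw [phi_pair, hdist] at hphiu
      have hDu0 : G.dist u0 w = d := by
        have := hfar w hw2
        omega
      have hyfar : d ≤ G.dist y w := htight w hw2 hDu0
      have hphiy := phi_le_dist hG hinj hdegs hw2 (y, port G enc y u0)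
      rw [phi_pair] at hphiy
      rcases Nat.eq_or_lt_of_le hyfar with heq | hlt
      · have hyw : y ≠ w := by
          intro hh
          rw [hh, SimpleGraph.dist_self] at heq
          omega
        have hg3 : gfun G enc w (y, port G enc y u0) = 3 := by
          refine gfun_eq_three hG hinj hdegs hyw hadj.symm ?_
          omega
        rw [hg3, ← heq] at hphiy
        omega
      · omega

lemma deg2_Pgr_iff (w : Fin 9) : hdeg Pgr w = 2 ↔ (w = 4 ∨ w = 6 ∨ w = 7) := by
  rw [hdeg_Pgr_vals]
  split
  · next hc => simpa using hc
  · next hc => simp [hc]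

theorem InvP_base : InvP Pgr Fin.val 1 := by
  refine ⟨by infer_instance, Fin.val_injective, Pgr_conn, ?_, le_refl 1, ?_, ?_⟩
  · intro v
    rw [hdeg_Pgr_vals]
    split
    · exact Or.inl rfl
    · exact Or.inr rfl
  · intro v
    have key : ∀ v : Fin 9, ∃ w : Fin 9, (w = 4 ∨ w = 6 ∨ w = 7) ∧ reachN 1 v w := by decide
    obtain ⟨w, hw, hr⟩ := key v
    exact ⟨w, (deg2_Pgr_iff w).mpr hw, dist_le_of_reachN hr⟩
  · refine ⟨0, 1, ?_, ?_, ?_⟩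
    · decide
    · intro w hw
      rcases (deg2_Pgr_iff w).mp hw with rfl | rfl | rfl <;>
        exact Pgr_conn.pos_dist_of_ne (by decide)
    · intro w hw _
      rcases (deg2_Pgr_iff w).mp hw with rfl | rfl | rfl <;>
        exact Pgr_conn.pos_dist_of_ne (by decide)

theorem ItP_inv (k : ℕ) : InvP (ItP k).G (ItP k).enc (2 ^ (2 * k + 1) - 1) := by
  induction k with
  | zero => exact InvP_base
  | succ k ih =>
    have h := ih.step
    have harith : 2 ^ (2 * (k + 1) + 1) - 1 = 4 * (2 ^ (2 * k + 1) - 1) + 3 := by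
      have h1 : 1 ≤ 2 ^ (2 * k + 1) := Nat.one_le_two_pow
      have h2 : 2 ^ (2 * (k + 1) + 1) = 2 ^ (2 * k + 1) * 4 := by
        rw [show 2 * (k + 1) + 1 = (2 * k + 1) + 2 by ring, pow_add]
        norm_num
      omega
    rw [harith]
    exact h



/-- `d_k = 2^{2k+1} - 1`, where `d_k` is the maximal distance in `Pᵏ`
from a vertex to the set `W_k` of the three 2-valent vertices of `Pᵏ`. -/
theorem stmt_5 (k : ℕ) :
    sSup (Set.range fun v : (ItP k).V =>
      sInf ((fun w => (ItP k).G.dist v w) '' {w | hdeg (ItP k).G w = 2})) =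
    2 ^ (2 * k + 1) - 1 := by
  have inv := ItP_inv k
  set d := 2 ^ (2 * k + 1) - 1 with hd
  have hub : ∀ v : (ItP k).V,
      sInf ((fun w => (ItP k).G.dist v w) '' {w | hdeg (ItP k).G w = 2}) ≤ d := by
    intro v
    obtain ⟨w, hw2, hdw⟩ := inv.upper v
    exact le_trans (Nat.sInf_le ⟨w, hw2, rfl⟩) hdw
  obtain ⟨u0, y, hadj, hfar, -⟩ := inv.lower
  have hmem : sInf ((fun w => (ItP k).G.dist u0 w) '' {w | hdeg (ItP k).G w = 2}) = d := by
    refine le_antisymm (hub u0) ?_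
    obtain ⟨w1, hw1, -⟩ := inv.upper u0
    refine le_csInf ⟨_, ⟨w1, hw1, rfl⟩⟩ ?_
    rintro x ⟨w, hw2, rfl⟩
    exact hfar w hw2
  refine le_antisymm ?_ ?_
  · refine csSup_le ⟨_, ⟨u0, rfl⟩⟩ ?_
    rintro x ⟨v, rfl⟩
    exact hub v
  · refine le_csSup ⟨d, ?_⟩ ⟨u0, hmem⟩
    rintro x ⟨v, rfl⟩
    exact hub v
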